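/- Let B₁,…,B_m ≻ 0 and let d(x) be the unique minimizer of d ↦ max_j (∇F_j(x)ᵀd + (1/2)dᵀB_j d) with optimal value θ(x). If x is not Pareto critical, then d(x) ≠ 0 and max_j ∇F_j(x)ᵀd(x) < θ(x) < 0. -/

import Mathlib

open scoped Matrix

set_option maxHeartbeats 1000000 in
theorem stmt_5 (n m : ℕ) (hm : 0 < m)
    (B : Fin m → Matrix (Fin n) (Fin n) ℝ) (hB : ∀ j, (B j).PosDef)
    (g : Fin m → (Fin n → ℝ)) (dstar : Fin n → ℝ) (θ : ℝ)
    (f : (Fin n → ℝ) → ℝ)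
    (hf : f = fun d => Finset.univ.sup' (Finset.univ_nonempty_iff.mpr ⟨⟨0, hm⟩⟩)
      (fun j => g j ⬝ᵥ d + (1 / 2) * (d ⬝ᵥ (B j).mulVec d)))
    (hmin : ∀ d, f dstar ≤ f d) (hθ : θ = f dstar)
    (hnotcrit : ∃ d : Fin n → ℝ, ∀ j, g j ⬝ᵥ d < 0) :
    dstar ≠ 0 ∧
    Finset.univ.sup' (Finset.univ_nonempty_iff.mpr ⟨⟨0, hm⟩⟩)
      (fun j => g j ⬝ᵥ dstar) < θ ∧ θ < 0 := by
  have hne : (Finset.univ : Finset (Fin m)).Nonempty :=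
    Finset.univ_nonempty_iff.mpr ⟨⟨0, hm⟩⟩
  have hquad : ∀ (j : Fin m) (v : Fin n → ℝ), v ≠ 0 → 0 < v ⬝ᵥ (B j).mulVec v := by
    intro j v hv
    have := (hB j).dotProduct_mulVec_pos hv
    simpa using this
  obtain ⟨d, hd⟩ := hnotcrit
  have hdne : d ≠ 0 := by
    intro h
    have := hd ⟨0, hm⟩
    rw [h] at this
    simp at this
  set ε := Finset.inf' Finset.univ hne (fun j => -(g j ⬝ᵥ d)) with hεdef
  have hεpos : 0 < ε := by
    rw [hεdef, Finset.lt_inf'_iff]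
    intro j _
    linarith [hd j]
  set Q := Finset.sup' Finset.univ hne (fun j => d ⬝ᵥ (B j).mulVec d) with hQdef
  have hQpos : 0 < Q :=
    lt_of_lt_of_le (hquad ⟨0, hm⟩ d hdne)
      (Finset.le_sup' (fun j => d ⬝ᵥ (B j).mulVec d) (Finset.mem_univ ⟨0, hm⟩))
  set t := ε / Q with htdef
  have htpos : 0 < t := div_pos hεpos hQpos
  have htQ : t * Q = ε := div_mul_cancel₀ ε (ne_of_gt hQpos)
  -- θ < 0
  have hθneg : θ < 0 := by
    have h1 : f dstar ≤ f (t • d) := hmin (t • d)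
    have h2 : f (t • d) < 0 := by
      rw [hf]
      simp only
      rw [Finset.sup'_lt_iff]
      intro j _
      have e1 : g j ⬝ᵥ (t • d) = t * (g j ⬝ᵥ d) := by
        simp [dotProduct_smul, smul_eq_mul]
      have e2 : (t • d) ⬝ᵥ (B j).mulVec (t • d) = t * (t * (d ⬝ᵥ (B j).mulVec d)) := by
        rw [Matrix.mulVec_smul, dotProduct_smul, smul_dotProduct]
        simp [smul_eq_mul]
      rw [e1, e2]
      have hj1 : g j ⬝ᵥ d ≤ -ε := by
        have := Finset.inf'_le (fun j => -(g j ⬝ᵥ d)) (Finset.mem_univ j)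
        rw [← hεdef] at this
        linarith
      have hj2 : d ⬝ᵥ (B j).mulVec d ≤ Q :=
        Finset.le_sup' (fun j => d ⬝ᵥ (B j).mulVec d) (Finset.mem_univ j)
      nlinarith [mul_le_mul_of_nonneg_left hj1 htpos.le,
        mul_le_mul_of_nonneg_left hj2 (mul_pos htpos htpos).le]
    rw [hθ]
    exact lt_of_le_of_lt h1 h2
  -- dstar ≠ 0
  have hdstar : dstar ≠ 0 := by
    intro h
    have hf0 : f dstar = 0 := by
      rw [hf, h]
      simp
    rw [hθ, hf0] at hθneg
    exact lt_irrefl 0 hθneg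
  refine ⟨hdstar, ?_, hθneg⟩
  rw [Finset.sup'_lt_iff]
  intro j _
  have hq : 0 < dstar ⬝ᵥ (B j).mulVec dstar := hquad j dstar hdstar
  have hle : g j ⬝ᵥ dstar + (1 / 2) * (dstar ⬝ᵥ (B j).mulVec dstar) ≤ θ := by
    rw [hθ, hf]
    exact Finset.le_sup' (fun j => g j ⬝ᵥ dstar + (1 / 2) * (dstar ⬝ᵥ (B j).mulVec dstar))
      (Finset.mem_univ j)
  linarith
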